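/- Let E be a directed graph. The operator (H,S) ↦ (H⊥, S⊥) on the set of admissible pairs of E satisfies (H⊥⊥⊥, S⊥⊥⊥) = (H⊥, S⊥) for every admissible pair (H,S); consequently the operator (H,S) ↦ (H⊥⊥, S⊥⊥) is idempotent. -/
import Mathlib


namespace GraphAnn

variable {V E : Type*}

/-- `u ≥ v`: there is a (possibly trivial) path from `u` to `v`. -/
def Reach (s r : E → V) : V → V → Prop :=
  Relation.ReflTransGen (fun a b => ∃ e, s e = a ∧ r e = b)

/-- The root `R(W)` of a set of vertices. -/
def Root (s r : E → V) (W : Set V) : Set V :=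
  {u | ∃ v ∈ W, Reach s r u v}

def Hereditary (s r : E → V) (H : Set V) : Prop :=
  ∀ u v, u ∈ H → Reach s r u v → v ∈ H

def IsSink (s : E → V) (v : V) : Prop := ∀ e : E, s e ≠ v

def IsInfiniteEmitter (s : E → V) (v : V) : Prop := {e : E | s e = v}.Infinite

def IsRegular (s : E → V) (v : V) : Prop := ¬ IsSink s v ∧ ¬ IsInfiniteEmitter s v

def Saturated (s r : E → V) (H : Set V) : Prop :=
  ∀ v, IsRegular s v → (∀ e : E, s e = v → r e ∈ H) → v ∈ H

/-- `V⊥ = E⁰ − R(V)`. -/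
def perp (s r : E → V) (W : Set V) : Set V := {v | v ∉ Root s r W}

/-- Breaking vertices `B_H`. -/
def Breaking (s r : E → V) (H : Set V) : Set V :=
  {v | v ∉ H ∧ IsInfiniteEmitter s v ∧
    {e : E | s e = v ∧ r e ∉ H}.Nonempty ∧ {e : E | s e = v ∧ r e ∉ H}.Finite}

/-- `(H,S)` is an admissible pair. -/
def Admissible (s r : E → V) (H S : Set V) : Prop :=
  Hereditary s r H ∧ Saturated s r H ∧ S ⊆ Breaking s r H

/-- `S⊥ = B_{H⊥} − S`. -/
def Sperp (s r : E → V) (H S : Set V) : Set V := Breaking s r (perp s r H) \ S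

/-- A cycle: a closed path of positive length in which distinct edges have
distinct sources. -/
structure GCycle (s r : E → V) where
  edges : List E
  ne : edges ≠ []
  chain : edges.Chain' (fun e f => r e = s f)
  closed : r (edges.getLast ne) = s (edges.head ne)
  srcNodup : (edges.map s).Nodup

/-- The vertex set `c⁰` of a cycle. -/
def GCycle.verts {s r : E → V} (c : GCycle s r) : Set V :=
  {v | ∃ e ∈ c.edges, s e = v}

/-- A cycle has an exit. -/
def GCycle.HasExit {s r : E → V} (c : GCycle s r) : Prop :=
  ∃ e, s e ∈ c.verts ∧ e ∉ c.edges

/-- An extreme cycle: it has an exit and every exit returns. -/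
def GCycle.Extreme {s r : E → V} (c : GCycle s r) : Prop :=
  c.HasExit ∧ ∀ v ∈ c.verts, ∀ w, Reach s r v w → ∃ u ∈ c.verts, Reach s r w u

/-- The vertex set `α⁰` of an infinite path `α`. -/
def InfPathVerts (s : E → V) (α : ℕ → E) : Set V := {v | ∃ n, s (α n) = v}

/-- Conditions (a), (b), (c): the graph is all-reflexive. -/
def AllReflexiveGraph (s r : E → V) : Prop :=
  (∀ c : GCycle s r, ¬ c.HasExit ∨ c.Extreme) ∧
  (∀ v, IsInfiniteEmitter s v → ∃ c : GCycle s r, v ∈ c.verts) ∧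
  (∀ α : ℕ → E, (∀ n, r (α n) = s (α (n + 1))) →
    {e : E | s e ∈ InfPathVerts s α ∧ r e ∉ Root s r (InfPathVerts s α)}.Finite)

lemma subset_root (s r : E → V) (W : Set V) : W ⊆ Root s r W :=
  fun v hv => ⟨v, hv, Relation.ReflTransGen.refl⟩

lemma root_mono (s r : E → V) {A B : Set V} (h : A ⊆ B) :
    Root s r A ⊆ Root s r B := fun _ ⟨v, hv, hr⟩ => ⟨v, h hv, hr⟩

lemma perp_anti (s r : E → V) {A B : Set V} (h : A ⊆ B) :
    perp s r B ⊆ perp s r A := fun _ hv hm => hv (root_mono s r h hm)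

lemma perp_hereditary (s r : E → V) (W : Set V) :
    Hereditary s r (perp s r W) := by
  intro u v hu huv hv
  obtain ⟨w, hw, hvw⟩ := hv
  exact hu ⟨w, hw, huv.trans hvw⟩

lemma hereditary_subset_perp_perp (s r : E → V) {H : Set V}
    (hH : Hereditary s r H) : H ⊆ perp s r (perp s r H) := by
  intro v hv ⟨u, hu, hvu⟩
  exact hu (subset_root s r H (hH v u hv hvu))

lemma perp_perp_perp_eq (s r : E → V) {H : Set V} (hH : Hereditary s r H) :
    perp s r (perp s r (perp s r H)) = perp s r H :=
  Set.Subset.antisymm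
    (perp_anti s r (hereditary_subset_perp_perp s r hH))
    (hereditary_subset_perp_perp s r (perp_hereditary s r H))

lemma breaking_inter_subset (s r : E → V) {H : Set V} (hH : Hereditary s r H) :
    Breaking s r H ∩ Breaking s r (perp s r H) ⊆
      Breaking s r (perp s r (perp s r H)) := by
  rintro x ⟨⟨hxH, hinf, _, hfinH⟩, ⟨hxP, _, _, hfinP⟩⟩
  -- there is an edge from x with range in H⊥
  have hex : {e : E | s e = x ∧ r e ∈ perp s r H}.Nonempty := by
    have : ({e : E | s e = x} \ {e : E | s e = x ∧ r e ∉ perp s r H}).Infinite :=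
      hinf.diff hfinP
    obtain ⟨e, he, hne⟩ := this.nonempty
    exact ⟨e, he, by by_contra hc; exact hne ⟨he, hc⟩⟩
  obtain ⟨e₀, he₀s, he₀r⟩ := hex
  refine ⟨?_, hinf, ⟨e₀, he₀s, ?_⟩, ?_⟩
  · -- x ∉ H⊥⊥ since x reaches r e₀ ∈ H⊥
    intro hx
    exact hx ⟨r e₀, he₀r,
      Relation.ReflTransGen.single ⟨e₀, he₀s, rfl⟩⟩
  · -- r e₀ ∈ H⊥ ⊆ Root H⊥, so r e₀ ∉ H⊥⊥
    intro hc
    exact hc (subset_root s r _ he₀r)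
  · -- edges with range outside H⊥⊥ have range outside H
    refine hfinH.subset ?_
    rintro e ⟨hes, her⟩
    refine ⟨hes, fun hrH => her (hereditary_subset_perp_perp s r hH hrH)⟩

/-- `(H⊥⊥⊥, S⊥⊥⊥) = (H⊥, S⊥)` for every admissible pair `(H,S)`; consequently
the operator `(H,S) ↦ (H⊥⊥, S⊥⊥)` is idempotent. -/
theorem perp_perp_perp (s r : E → V) (H S : Set V) (h : Admissible s r H S) :
    perp s r (perp s r (perp s r H)) = perp s r H ∧
      Sperp s r (perp s r (perp s r H)) (Sperp s r (perp s r H) (Sperp s r H S)) =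
        Sperp s r H S := by
  obtain ⟨hHer, _, hSB⟩ := h
  have h3 := perp_perp_perp_eq s r hHer
  refine ⟨h3, ?_⟩
  unfold Sperp
  rw [h3]
  -- A = B_{H⊥}, C = B_{H⊥⊥}; goal: A \ (C \ (A \ S)) = A \ S
  have key : S ∩ Breaking s r (perp s r H) ⊆ Breaking s r (perp s r (perp s r H)) := by
    intro x ⟨hxS, hxA⟩
    exact breaking_inter_subset s r hHer ⟨hSB hxS, hxA⟩
  ext x
  simp only [Set.mem_diff]
  constructor
  · rintro ⟨hxA, hx⟩
    refine ⟨hxA, fun hxS => hx ⟨key ⟨hxS, hxA⟩, fun ⟨_, h2⟩ => h2 hxS⟩⟩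
  · rintro ⟨hxA, hxS⟩
    exact ⟨hxA, fun ⟨_, h2⟩ => h2 ⟨hxA, hxS⟩⟩

end GraphAnn
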